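/- For the mapping class φ = RL² of the once-punctured torus, the periodicity condition x[4] = x[1] for the cluster pattern with initial cluster (x₁, x₂, x₃), trivial coefficients, and exchange matrix B = [[0,−2,2],[2,0,−2],[−2,2,0]], where R(x) = (x₃, x₂, (x₂² + x₃²)/x₁) and L(x) = (x₁, x₃, (x₁² + x₃²)/x₂), implies x₁ = x₃ and (x₂/x₃)⁴ + (x₂/x₃)² + 2 = 0. -/

import Mathlib

/-- The flip `R` on clusters of the once-punctured torus (trivial coefficients):
`R(x) = (x₃, x₂, (x₂² + x₃²)/x₁)`. -/
noncomputable def RflipX (x : ℂ × ℂ × ℂ) : ℂ × ℂ × ℂ :=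
  (x.2.2, x.2.1, (x.2.1 ^ 2 + x.2.2 ^ 2) / x.1)

/-- The flip `L` on clusters of the once-punctured torus (trivial coefficients):
`L(x) = (x₁, x₃, (x₁² + x₃²)/x₂)`. -/
noncomputable def LflipX (x : ℂ × ℂ × ℂ) : ℂ × ℂ × ℂ :=
  (x.1, x.2.2, (x.1 ^ 2 + x.2.2 ^ 2) / x.2.1)

/-- For the mapping class `φ = RL²`, the periodicity condition `x[4] = x[1]` of the
cluster pattern with initial cluster `(x₁, x₂, x₃)` implies `x₁ = x₃` and
`(x₂/x₃)⁴ + (x₂/x₃)² + 2 = 0`. -/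
theorem RL2_periodicity (x1 x2 x3 : ℂ)
    (h1 : x1 ≠ 0) (h2 : x2 ≠ 0) (h3 : x3 ≠ 0)
    (h23 : x2 ^ 2 + x3 ^ 2 ≠ 0)
    (X1 X2 X3 X4 : ℂ × ℂ × ℂ)
    (hX1 : X1 = (x1, x2, x3))
    (hX2 : X2 = RflipX X1) (hX3 : X3 = LflipX X2) (hX4 : X4 = LflipX X3)
    (hper : X4 = X1) :
    x1 = x3 ∧ (x2 / x3) ^ 4 + (x2 / x3) ^ 2 + 2 = 0 := by
  subst hX1 hX2 hX3 hX4
  simp only [RflipX, LflipX, Prod.mk.injEq] at hper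
  obtain ⟨e1, e2, e3⟩ := hper
  refine ⟨e1.symm, ?_⟩
  rw [← e1] at e2
  have key : x2 ^ 4 + x2 ^ 2 * x3 ^ 2 + 2 * x3 ^ 4 = 0 := by
    field_simp at e2
    linear_combination e2
  field_simp
  linear_combination key
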